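/- If S ⊆ {1,...,n} is sum-free and a is the largest element of S, then |S| ≤ ⌈a/2⌉; in particular |S| ≤ ⌈n/2⌉. -/

import Mathlib

theorem stmt_3 (n : ℕ) (S : Finset ℕ) (hS : S ⊆ Finset.Icc 1 n)
    (hne : S.Nonempty) (hsf : ∀ x ∈ S, ∀ y ∈ S, x + y ∉ S) :
    S.card ≤ (S.max' hne + 1) / 2 ∧ S.card ≤ (n + 1) / 2 := by
  set a := S.max' hne with ha
  have haS : a ∈ S := S.max'_mem hne
  have ha1 : 1 ≤ a := (Finset.mem_Icc.1 (hS haS)).1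
  have han : a ≤ n := (Finset.mem_Icc.1 (hS haS)).2
  have key : (S.erase a).card ≤ (a - 1) / 2 := by
    have hle : (S.erase a).card ≤ (Finset.Icc 1 ((a - 1) / 2)).card := by
      apply Finset.card_le_card_of_injOn (fun x => min x (a - x))
      · intro x hx
        obtain ⟨hxa, hxS⟩ := Finset.mem_erase.1 hx
        have h1 : 1 ≤ x := (Finset.mem_Icc.1 (hS hxS)).1
        have hlt : x < a := lt_of_le_of_ne (S.le_max' x hxS) hxa
        have hne2 : x ≠ a - x := by
          intro h
          apply hsf x hxS x hxS
          have hxx : x + x = a := by omega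
          rwa [hxx]
        simp only [Finset.mem_coe, Finset.mem_Icc]
        rcases le_total x (a - x) with h | h
        · rw [min_eq_left h]; omega
        · rw [min_eq_right h]; omega
      · intro x hx y hy hxy
        obtain ⟨hxa, hxS⟩ := Finset.mem_erase.1 hx
        obtain ⟨hya, hyS⟩ := Finset.mem_erase.1 hy
        have h1x : 1 ≤ x := (Finset.mem_Icc.1 (hS hxS)).1
        have h1y : 1 ≤ y := (Finset.mem_Icc.1 (hS hyS)).1
        have hltx : x < a := lt_of_le_of_ne (S.le_max' x hxS) hxa
        have hlty : y < a := lt_of_le_of_ne (S.le_max' y hyS) hya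
        have hkey : x = y ∨ x + y = a := by
          simp only at hxy
          simp only [min_def] at hxy
          split_ifs at hxy <;> omega
        rcases hkey with h | h
        · exact h
        · exfalso
          apply hsf x hxS y hyS
          rwa [h]
    rwa [Nat.card_Icc, Nat.add_sub_cancel] at hle
  have hcard : (S.erase a).card = S.card - 1 := Finset.card_erase_of_mem haS
  have hpos : 1 ≤ S.card := Finset.card_pos.2 hne
  constructor <;> omega
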